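/- If the 1-norm of a vector x ∈ ℝ^M is at most 1, and each clipped gradient term has ℓ2-norm at most G, then for two datasets D and D' = D ∪ {d'} of sizes |D| and |D|+1, one gradient-descent step with learning rate η satisfies ‖ω(D) - ω(D')‖₂ ≤ 2ηG/|D|, where ω(D) = w - (η/|D|) Σ_{d∈D} g(d) and ω(D') = w - (η/(|D|+1)) Σ_{d∈D'} g(d) with ‖g(d)‖₂ ≤ G for all d. -/
import Mathlib

/-- Classical ℓ2-sensitivity of one clipped gradient-descent step: for adjacent
datasets `D` and `D' = D ∪ {d'}`, with per-sample clipped gradients of ℓ2-norm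
at most `G` and learning rate `η > 0`,
`‖ω(D) - ω(D')‖₂ ≤ 2ηG/|D|`. -/
theorem gradient_step_sensitivity {α : Type*} [DecidableEq α] {M : ℕ}
    (x : EuclideanSpace ℝ (Fin M)) (hx : ∑ i, |x i| ≤ 1)
    (D : Finset α) (hD : D.Nonempty) (d' : α) (hd' : d' ∉ D)
    (g : α → EuclideanSpace ℝ (Fin M)) (G : ℝ)
    (hG : ∀ d ∈ insert d' D, ‖g d‖ ≤ G)
    (η : ℝ) (hη : 0 < η) (w : EuclideanSpace ℝ (Fin M)) :
    ‖(w - (η / (D.card : ℝ)) • ∑ d ∈ D, g d)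
      - (w - (η / ((D.card : ℝ) + 1)) • ∑ d ∈ insert d' D, g d)‖
      ≤ 2 * η * G / (D.card : ℝ) := by
  have hn : (0:ℝ) < (D.card : ℝ) := by exact_mod_cast Finset.card_pos.mpr hD
  set n : ℝ := (D.card : ℝ) with hn'
  have hG0 : 0 ≤ G := le_trans (norm_nonneg _) (hG d' (Finset.mem_insert_self _ _))
  have hS : ‖∑ d ∈ D, g d‖ ≤ n * G := by
    calc ‖∑ d ∈ D, g d‖ ≤ ∑ d ∈ D, ‖g d‖ := norm_sum_le _ _
    _ ≤ ∑ d ∈ D, G := Finset.sum_le_sum fun d hd => hG d (Finset.mem_insert_of_mem hd)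
    _ = n * G := by simp [hn', mul_comm]
  rw [Finset.sum_insert hd']
  have key : (w - (η / n) • ∑ d ∈ D, g d) - (w - (η / (n+1)) • (g d' + ∑ d ∈ D, g d))
      = (η/(n+1)) • g d' + ((η/(n+1)) - (η/n)) • ∑ d ∈ D, g d := by
    module
  rw [key]
  have hn1 : (0:ℝ) < n + 1 := by linarith
  have h1 : ‖(η/(n+1)) • g d'‖ ≤ η/(n+1) * G := by
    rw [norm_smul, Real.norm_eq_abs, abs_of_pos (by positivity)]
    exact mul_le_mul_of_nonneg_left (hG d' (Finset.mem_insert_self _ _)) (by positivity)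
  have h2 : ‖((η/(n+1)) - (η/n)) • ∑ d ∈ D, g d‖ ≤ (η/n - η/(n+1)) * (n * G) := by
    rw [norm_smul, Real.norm_eq_abs]
    have hle : η/(n+1) ≤ η/n := by
      apply div_le_div_of_nonneg_left hη.le hn; linarith
    rw [abs_of_nonpos (by linarith), neg_sub]
    exact mul_le_mul_of_nonneg_left hS (by linarith)
  calc ‖(η/(n+1)) • g d' + ((η/(n+1)) - (η/n)) • ∑ d ∈ D, g d‖
      ≤ ‖(η/(n+1)) • g d'‖ + ‖((η/(n+1)) - (η/n)) • ∑ d ∈ D, g d‖ := norm_add_le _ _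
    _ ≤ η/(n+1) * G + (η/n - η/(n+1)) * (n * G) := add_le_add h1 h2
    _ = 2 * η * G / (n+1) := by field_simp; ring
    _ ≤ 2 * η * G / n := by
        apply div_le_div_of_nonneg_left (by positivity) hn; linarith
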